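/- arXiv:2007.02647 — 3 statements merged into one kernel-verified Lean document; each statement's English description precedes it below -/
import Mathlib

section
/- Let Γ and G be groups, let ρ : Γ → G be a quasi-homomorphism and let φ : Γ → G be a witness for ρ. Then for all x, y ∈ Γ, the element φ(x·y)⁻¹ · φ(x) · φ(y) lies in the centralizer in G of the image ρ(Γ), i.e. it commutes with ρ(z) for every z ∈ Γ. -/
/-- If `ρ : Γ → G` is a quasi-homomorphism with witness `φ`, then for all `x, y ∈ Γ` the
element `φ(x·y)⁻¹ · φ(x) · φ(y)` centralizes the image of `ρ`. -/
theorem quasiHom_witness_defect_mem_centralizer {Γ G : Type*} [Group Γ] [Group G]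
    (ρ φ : Γ → G)
    (hφ : ∀ x y : Γ, (ρ x)⁻¹ * ρ (x * y) = φ x * ρ y * (φ x)⁻¹) (x y : Γ) :
    (φ (x * y))⁻¹ * φ x * φ y ∈ Subgroup.centralizer (Set.range ρ) := by
  rw [Subgroup.mem_centralizer_iff]
  rintro g ⟨z, rfl⟩
  have h1 := hφ (x * y) z
  have h2 := hφ x (y * z)
  have h3 := hφ y z
  have h4 := hφ x y
  rw [← mul_assoc] at h2
  have h1' : ρ (x * y * z) = ρ (x * y) * (φ (x * y) * ρ z * (φ (x * y))⁻¹) := by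
    rw [← h1]; group
  have h2' : ρ (x * y * z) = ρ x * (φ x * ρ (y * z) * (φ x)⁻¹) := by
    rw [← h2]; group
  have h3' : ρ (y * z) = ρ y * (φ y * ρ z * (φ y)⁻¹) := by
    rw [← h3]; group
  have h4' : ρ (x * y) = ρ x * (φ x * ρ y * (φ x)⁻¹) := by
    rw [← h4]; group
  have e := h1'.symm.trans h2'
  rw [h3', h4'] at e
  have key : φ (x * y) * ρ z * (φ (x * y))⁻¹
      = φ x * φ y * ρ z * (φ y)⁻¹ * (φ x)⁻¹ := by
    have e2 : φ (x * y) * ρ z * (φ (x * y))⁻¹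
        = (ρ x * (φ x * ρ y * (φ x)⁻¹))⁻¹ *
          (ρ x * (φ x * (ρ y * (φ y * ρ z * (φ y)⁻¹)) * (φ x)⁻¹)) := by
      rw [← e]; group
    rw [e2]; group
  calc ρ z * ((φ (x * y))⁻¹ * φ x * φ y)
      = (φ (x * y))⁻¹ * (φ (x * y) * ρ z * (φ (x * y))⁻¹) * (φ x * φ y) := by group
    _ = (φ (x * y))⁻¹ * (φ x * φ y * ρ z * (φ y)⁻¹ * (φ x)⁻¹) * (φ x * φ y) := by rw [key]
    _ = (φ (x * y))⁻¹ * φ x * φ y * ρ z := by group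
end

section
/- Let Γ and G be groups, let σ : Γ → G be a group homomorphism, let φ : Γ → G be a group homomorphism whose image lies in the centralizer in G of σ(Γ), and let g ∈ G. Then the map ρ : Γ → G defined by ρ(x) = g⁻¹ · σ(x) · φ(x) · g · φ(x)⁻¹ is a quasi-homomorphism, with witness φ, i.e. ρ(x)⁻¹ · ρ(x·y) = φ(x) · ρ(y) · φ(x)⁻¹ for all x, y ∈ Γ. -/
/-- Let `σ, φ : Γ →* G` be group homomorphisms with the image of `φ` contained in the
centralizer of the image of `σ`, and let `g ∈ G`.  Then `ρ(x) = g⁻¹·σ(x)·φ(x)·g·φ(x)⁻¹`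
is a quasi-homomorphism with witness `φ`. -/
theorem conj_twist_isQuasiHom {Γ G : Type*} [Group Γ] [Group G] (σ φ : Γ →* G)
    (hcent : ∀ x : Γ, φ x ∈ Subgroup.centralizer (Set.range ⇑σ)) (g : G)
    (ρ : Γ → G) (hρ : ∀ x : Γ, ρ x = g⁻¹ * σ x * φ x * g * (φ x)⁻¹) :
    ∀ x y : Γ, (ρ x)⁻¹ * ρ (x * y) = φ x * ρ y * (φ x)⁻¹ := by
  intro x y
  have h1 : σ y * φ x = φ x * σ y := hcent x (σ y) ⟨y, rfl⟩
  have h2 : σ y * (φ x)⁻¹ = (φ x)⁻¹ * σ y := by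
    rw [mul_inv_eq_iff_eq_mul, mul_assoc, h1, ← mul_assoc, inv_mul_cancel, one_mul]
  rw [hρ, hρ, hρ, map_mul, map_mul]
  calc (g⁻¹ * σ x * φ x * g * (φ x)⁻¹)⁻¹ *
        (g⁻¹ * (σ x * σ y) * (φ x * φ y) * g * (φ x * φ y)⁻¹)
      = φ x * g⁻¹ * ((φ x)⁻¹ * σ y) * φ x * (φ y * g * (φ y)⁻¹ * (φ x)⁻¹) := by group
    _ = φ x * g⁻¹ * (σ y * (φ x)⁻¹) * φ x * (φ y * g * (φ y)⁻¹ * (φ x)⁻¹) := by rw [h2]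
    _ = φ x * (g⁻¹ * σ y * φ y * g * (φ y)⁻¹) * (φ x)⁻¹ := by group
end

section
/- Let Γ and G be groups and let ρ : Γ → G be a quasi-homomorphism with witness φ : Γ → G. Suppose in addition that (1) ρ(x⁻¹) = ρ(x)⁻¹ for all x ∈ Γ, and (2) ρ(x)⁻¹ · ρ(x·y) = ρ(y·x) · ρ(x)⁻¹ for all x, y ∈ Γ. Then for every x ∈ Γ the element φ(x)² lies in the centralizer in G of the image ρ(Γ), i.e. φ(x)² commutes with ρ(z) for all z ∈ Γ. -/
/-- Let `ρ : Γ → G` be a quasi-homomorphism with witness `φ` satisfying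
(1) `ρ(x⁻¹) = ρ(x)⁻¹` and (2) `ρ(x)⁻¹·ρ(x·y) = ρ(y·x)·ρ(x)⁻¹` for all `x, y ∈ Γ`.
Then `φ(x)²` centralizes the image of `ρ` for every `x ∈ Γ`. -/
theorem quasiHom_witness_sq_mem_centralizer {Γ G : Type*} [Group Γ] [Group G] (ρ φ : Γ → G)
    (hφ : ∀ x y : Γ, (ρ x)⁻¹ * ρ (x * y) = φ x * ρ y * (φ x)⁻¹)
    (hinv : ∀ x : Γ, ρ x⁻¹ = (ρ x)⁻¹)
    (hrefl : ∀ x y : Γ, (ρ x)⁻¹ * ρ (x * y) = ρ (y * x) * (ρ x)⁻¹) (x : Γ) :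
    (φ x) ^ 2 ∈ Subgroup.centralizer (Set.range ρ) := by
  rw [Subgroup.mem_centralizer_iff]
  rintro g ⟨z, rfl⟩
  -- ρ 1 = 1
  have h1 : ρ 1 = 1 := by
    have h := hφ 1 1
    rw [mul_one, inv_mul_cancel] at h
    have h' : φ 1 * ρ 1 = φ 1 := by
      have := h.symm
      rw [mul_inv_eq_one] at this
      exact this
    exact (mul_eq_left).mp h'
  -- conjugation by φ x fixes (ρ x)⁻¹
  have h2 : φ x * (ρ x)⁻¹ * (φ x)⁻¹ = (ρ x)⁻¹ := by
    have h := hφ x x⁻¹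
    rw [mul_inv_cancel, h1, mul_one, hinv] at h
    exact h.symm
  -- key: ρ (w⁻¹ * x) = ρ (w⁻¹ * x⁻¹) * (ρ x)^2
  have hkey : ∀ w : Γ, ρ (w⁻¹ * x) = ρ (w⁻¹ * x⁻¹) * (ρ x) ^ 2 := by
    intro w
    have e1 := hφ x w
    have e2 := hφ x w⁻¹
    rw [hinv] at e2
    -- e2 : (ρ x)⁻¹ * ρ (x * w⁻¹) = φ x * (ρ w)⁻¹ * (φ x)⁻¹
    have e3 : φ x * (ρ w)⁻¹ * (φ x)⁻¹ = ((ρ x)⁻¹ * ρ (x * w))⁻¹ * (ρ x)⁻¹ * (ρ x) := by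
      rw [e1]; group
    rw [e3] at e2
    have e4 : ((ρ x)⁻¹ * ρ (x * w))⁻¹ = ρ ((x * w)⁻¹) * ρ x := by
      rw [hinv]; group
    rw [e4] at e2
    -- e2 : (ρ x)⁻¹ * ρ (x * w⁻¹) = ρ ((x*w)⁻¹) * ρ x * (ρ x)⁻¹ * ρ x
    have e5 := hrefl x w⁻¹
    -- e5 : (ρ x)⁻¹ * ρ (x * w⁻¹) = ρ (w⁻¹ * x) * (ρ x)⁻¹
    rw [e5] at e2
    have e6 : (x * w)⁻¹ = w⁻¹ * x⁻¹ := by group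
    rw [e6] at e2
    -- e2 : ρ (w⁻¹ * x) * (ρ x)⁻¹ = ρ (w⁻¹ * x⁻¹) * ρ x * (ρ x)⁻¹ * ρ x
    calc ρ (w⁻¹ * x) = ρ (w⁻¹ * x) * (ρ x)⁻¹ * ρ x := by
          rw [mul_assoc, inv_mul_cancel, mul_one]
      _ = ρ (w⁻¹ * x⁻¹) * ρ x * (ρ x)⁻¹ * ρ x * ρ x := by rw [e2]
      _ = ρ (w⁻¹ * x⁻¹) * (ρ x) ^ 2 := by rw [sq]; simp [mul_assoc]
  -- conjugation by φ x on ρ z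
  have hc : ∀ z : Γ, φ x * ρ z * (φ x)⁻¹ = ρ (z * x) * (ρ x)⁻¹ := by
    intro z
    rw [← hφ x z, hrefl x z]
  -- double conjugation is the identity
  have hc2 : φ x * (φ x * ρ z * (φ x)⁻¹) * (φ x)⁻¹ = ρ z := by
    rw [hc z]
    have : φ x * (ρ (z * x) * (ρ x)⁻¹) * (φ x)⁻¹
        = (φ x * ρ (z * x) * (φ x)⁻¹) * (φ x * (ρ x)⁻¹ * (φ x)⁻¹) := by group
    rw [this, hc (z * x), h2]
    have hk := hkey ((z * x)⁻¹)
    rw [inv_inv] at hk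
    have hz : (z * x) * x⁻¹ = z := by group
    rw [hz] at hk
    rw [hk, sq]
    simp [mul_assoc]
  have hfin : ρ z * φ x ^ 2 = φ x ^ 2 * ρ z := by
    rw [sq]
    calc ρ z * (φ x * φ x)
        = (φ x * (φ x * ρ z * (φ x)⁻¹) * (φ x)⁻¹) * (φ x * φ x) := by rw [hc2]
      _ = φ x * φ x * ρ z := by group
  exact hfin
end
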